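/- Let h_y : ℝ → ℝ (for y ∈ [1/2,1]) be the function equal to 1 on the slice of the diamond W₀, equal to 4 for |x| ≥ y, and linear in |x| in between. Define h : {z ∈ ℂ : 1/2 ≤ Im z ≤ 1} → ℂ by h(x + iy) = h_y(x)·x + iy. Then h maps the closed strip S̄ = {z : 1/2 ≤ Im z ≤ 1} bijectively onto itself. -/

import Mathlib

open Set Complex

/-- The open diamond `W₀` with vertices `i`, `i/2`, `(3i+1)/4`, `(3i-1)/4`. -/
def W0 : Set ℂ := {z : ℂ | |z.re| + |z.im - 3/4| < 1/4}

/-- The slice function `h_y`: 1 on the slice of the diamond `W₀`, 4 for `|x| ≥ y`,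
and linear in `|x|` in between. -/
noncomputable def hy (y x : ℝ) : ℝ :=
  if |x| + |y - 3/4| < 1/4 then 1
  else if y ≤ |x| then 4
  else if y ≤ 3/4 then 6 * |x| - 6 * y + 4
  else (3 * |x| + 5 * y - 4) / (2 * y - 1)

/-- The map `h(x + iy) = h_y(x)·x + iy`. -/
noncomputable def hmap (z : ℂ) : ℂ := ⟨hy z.im z.re * z.re, z.im⟩

/-- The closed strip `S̄ = {z : 1/2 ≤ Im z ≤ 1}`. -/
def Sbar : Set ℂ := {z : ℂ | 1/2 ≤ z.im ∧ z.im ≤ 1}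

/-- The slice map `x ↦ h_y(x) x`. -/
noncomputable def gy (y x : ℝ) : ℝ := hy y x * x

/-- Explicit inverse of the slice map. -/
noncomputable def ginv (y t : ℝ) : ℝ :=
  if 4 * y ≤ |t| then t / 4
  else if |t| + |y - 3/4| < 1/4 then t
  else if y ≤ 3/4 then Real.sign t * (6*y - 4 + Real.sqrt ((4-6*y)^2 + 24*|t|)) / 12
  else Real.sign t * (4 - 5*y + Real.sqrt ((5*y-4)^2 + 12*(2*y-1)*|t|)) / 6

lemma hy_neg (y x : ℝ) : hy y (-x) = hy y x := by unfold hy; rw [abs_neg]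

lemma gy_neg (y x : ℝ) : gy y (-x) = -(gy y x) := by unfold gy; rw [hy_neg]; ring

lemma ginv_neg (y t : ℝ) : ginv y (-t) = -(ginv y t) := by
  unfold ginv; rw [abs_neg, Real.sign_neg]; split_ifs <;> ring

lemma mySignMulSelf (t x : ℝ) (hx : 0 ≤ x) (h : x ≠ 0 → 0 < t) :
    Real.sign t * x = x := by
  rcases eq_or_lt_of_le hx with h0 | h0
  · rw [← h0, mul_zero]
  · rw [Real.sign_of_pos (h h0.ne'), one_mul]

lemma left_inv_nonneg (y x : ℝ) (h1 : 1/2 ≤ y) (h2 : y ≤ 1) (hx : 0 ≤ x) :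
    ginv y (gy y x) = x := by
  have hax : |x| = x := _root_.abs_of_nonneg hx
  unfold gy hy
  rw [hax]
  by_cases hd : x + |y - 3/4| < 1/4
  · rw [if_pos hd]
    have habs : |1 * x| = x := by rw [one_mul, hax]
    have hx4 : ¬ (4*y ≤ |1*x|) := by
      rw [habs]; push_neg; nlinarith [abs_nonneg (y - 3/4)]
    unfold ginv
    rw [if_neg hx4, if_pos (by rw [habs]; exact hd)]
    ring
  · rw [if_neg hd]
    by_cases hxy : y ≤ x
    · rw [if_pos hxy]
      have habs : |4*x| = 4*x := _root_.abs_of_nonneg (by linarith)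
      unfold ginv
      rw [if_pos (by rw [habs]; linarith)]
      ring
    · rw [if_neg hxy]
      push_neg at hd hxy
      by_cases hy3 : y ≤ 3/4
      · rw [if_pos hy3]
        have hay : |y - 3/4| = 3/4 - y := by
          rw [abs_of_nonpos (by linarith : y - 3/4 ≤ 0)]; ring
        rw [hay] at hd
        have ht0 : 0 ≤ (6*x - 6*y + 4) * x := by nlinarith
        have hat : |(6*x - 6*y + 4) * x| = (6*x - 6*y + 4) * x := _root_.abs_of_nonneg ht0
        have haux1 : (0:ℝ) < (y - x) * (6*x + 4) :=
          mul_pos (by linarith) (by linarith)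
        have hc1 : ¬ (4*y ≤ (6*x - 6*y + 4) * x) := by push_neg; nlinarith
        have haux2 : (0:ℝ) ≤ (x - (y - 1/2)) * (x + 1/6) :=
          mul_nonneg (by linarith) (by linarith)
        have hc2 : ¬ ((6*x - 6*y + 4) * x + (3/4 - y) < 1/4) := by push_neg; nlinarith
        unfold ginv
        rw [hat, hay]
        rw [if_neg hc1, if_neg hc2, if_pos hy3]
        rw [show (4-6*y)^2 + 24*((6*x - 6*y + 4) * x) = (12*x + 4 - 6*y)^2 by ring,
            Real.sqrt_sq (by nlinarith)]
        rw [show Real.sign ((6*x - 6*y + 4) * x) * (6*y - 4 + (12*x + 4 - 6*y)) / 12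
              = Real.sign ((6*x - 6*y + 4) * x) * x by ring]
        exact mySignMulSelf _ _ hx fun hne =>
          mul_pos (by nlinarith) (lt_of_le_of_ne hx (Ne.symm hne))
      · rw [if_neg hy3]
        push_neg at hy3
        have hay : |y - 3/4| = y - 3/4 := _root_.abs_of_nonneg (by linarith)
        rw [hay] at hd
        have h2y : (0:ℝ) < 2*y - 1 := by linarith
        have hnum : 0 ≤ 3*x + 5*y - 4 := by linarith
        have ht0 : 0 ≤ (3*x + 5*y - 4) / (2*y - 1) * x :=
          mul_nonneg (div_nonneg hnum h2y.le) hx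
        have hval : (3*x + 5*y - 4) / (2*y - 1) * x = (3*x^2 + (5*y-4)*x) / (2*y-1) := by
          field_simp; ring
        rw [hval] at ht0
        have hat : |(3*x^2 + (5*y-4)*x) / (2*y-1)| = (3*x^2 + (5*y-4)*x) / (2*y-1) :=
          _root_.abs_of_nonneg ht0
        have haux1 : (0:ℝ) < (y - x) * (3*x + 8*y - 4) :=
          mul_pos (by linarith) (by nlinarith)
        have hc1 : ¬ (4*y ≤ (3*x^2 + (5*y-4)*x) / (2*y-1)) := by
          push_neg; rw [div_lt_iff₀ h2y]; nlinarith
        have haux2 : (0:ℝ) ≤ (x - (1 - y)) * (x + (2*y-1)/3) :=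
          mul_nonneg (by linarith) (by nlinarith)
        have hc2 : ¬ ((3*x^2 + (5*y-4)*x) / (2*y-1) + (y - 3/4) < 1/4) := by
          push_neg
          have hdd : 1 - y ≤ (3*x^2 + (5*y-4)*x) / (2*y-1) := by
            rw [le_div_iff₀ h2y]; nlinarith
          linarith
        unfold ginv
        rw [hval, hat, hay]
        rw [if_neg hc1, if_neg hc2, if_neg (by linarith)]
        rw [show (5*y-4)^2 + 12*(2*y-1)*((3*x^2 + (5*y-4)*x) / (2*y-1))
              = (6*x + 5*y - 4)^2 by rw [mul_assoc, mul_div_cancel₀ _ h2y.ne']; ring,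
            Real.sqrt_sq (by nlinarith)]
        rw [show Real.sign ((3*x^2 + (5*y-4)*x) / (2*y-1)) * (4 - 5*y + (6*x + 5*y - 4)) / 6
              = Real.sign ((3*x^2 + (5*y-4)*x) / (2*y-1)) * x by ring]
        refine mySignMulSelf _ _ hx fun hne => ?_
        have hxpos : 0 < x := lt_of_le_of_ne hx (Ne.symm hne)
        apply div_pos _ h2y
        nlinarith

lemma gy_zero (y : ℝ) : gy y 0 = 0 := by unfold gy; rw [mul_zero]

set_option maxHeartbeats 1000000 in
lemma right_inv_nonneg (y t : ℝ) (h1 : 1/2 ≤ y) (h2 : y ≤ 1) (ht : 0 ≤ t) :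
    gy y (ginv y t) = t := by
  have hat : |t| = t := _root_.abs_of_nonneg ht
  unfold ginv
  rw [hat]
  by_cases h4 : 4*y ≤ t
  · rw [if_pos h4]
    have hx : y ≤ t/4 := by linarith
    have hx0 : (0:ℝ) ≤ t/4 := by linarith
    unfold gy hy
    rw [_root_.abs_of_nonneg hx0]
    rw [if_neg (by push_neg; nlinarith [abs_nonneg (y - 3/4)]), if_pos hx]
    ring
  · rw [if_neg h4]
    push_neg at h4
    by_cases hd : t + |y - 3/4| < 1/4
    · rw [if_pos hd]
      unfold gy hy
      rw [hat, if_pos hd]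
      ring
    · rw [if_neg hd]
      push_neg at hd
      rcases eq_or_lt_of_le ht with h0 | h0
      · rw [← h0, Real.sign_zero]
        split_ifs <;> rw [zero_mul, zero_div, gy_zero]
      by_cases hy3 : y ≤ 3/4
      · rw [if_pos hy3]
        have hay : |y - 3/4| = 3/4 - y := by
          rw [abs_of_nonpos (by linarith : y - 3/4 ≤ 0)]; ring
        rw [hay] at hd
        set s := Real.sqrt ((4-6*y)^2 + 24*t) with hsdef
        have hs0 : 0 ≤ s := Real.sqrt_nonneg _
        have hs2 : s^2 = (4-6*y)^2 + 24*t := Real.sq_sqrt (by nlinarith)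
        have hslb : 6*y - 2 ≤ s := by nlinarith
        have hsub : s < 6*y + 4 := by nlinarith
        rw [Real.sign_of_pos h0, one_mul]
        have hxlb : y - 1/2 ≤ (6*y - 4 + s) / 12 := by nlinarith
        have hxub : (6*y - 4 + s) / 12 < y := by nlinarith
        have hx0 : 0 ≤ (6*y - 4 + s) / 12 := le_trans (by linarith) hxlb
        unfold gy hy
        rw [_root_.abs_of_nonneg hx0, hay]
        rw [if_neg (by push_neg; linarith), if_neg (by push_neg; exact hxub), if_pos hy3]
        nlinarith
      · rw [if_neg hy3]
        push_neg at hy3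
        have hay : |y - 3/4| = y - 3/4 := _root_.abs_of_nonneg (by linarith)
        rw [hay] at hd
        have h2y : (0:ℝ) < 2*y - 1 := by linarith
        set s := Real.sqrt ((5*y-4)^2 + 12*(2*y-1)*t) with hsdef
        have hs0 : 0 ≤ s := Real.sqrt_nonneg _
        have hs2 : s^2 = (5*y-4)^2 + 12*(2*y-1)*t := Real.sq_sqrt (by nlinarith)
        have hslb : 2 - y ≤ s := by nlinarith
        have hsub : s < 11*y - 4 := by nlinarith
        rw [Real.sign_of_pos h0, one_mul]
        have hxlb : 1 - y ≤ (4 - 5*y + s) / 6 := by nlinarith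
        have hxub : (4 - 5*y + s) / 6 < y := by nlinarith
        have hx0 : 0 ≤ (4 - 5*y + s) / 6 := le_trans (by linarith) hxlb
        unfold gy hy
        rw [_root_.abs_of_nonneg hx0, hay]
        rw [if_neg (by push_neg; linarith), if_neg (by push_neg; exact hxub),
            if_neg (by linarith)]
        rw [div_mul_eq_mul_div, div_eq_iff h2y.ne']
        nlinarith

lemma gy_left_inv (y x : ℝ) (h1 : 1/2 ≤ y) (h2 : y ≤ 1) : ginv y (gy y x) = x := by
  rcases le_or_gt 0 x with hx | hx
  · exact left_inv_nonneg y x h1 h2 hx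
  · have := left_inv_nonneg y (-x) h1 h2 (by linarith)
    rw [gy_neg, ginv_neg] at this
    linarith

lemma gy_right_inv (y t : ℝ) (h1 : 1/2 ≤ y) (h2 : y ≤ 1) : gy y (ginv y t) = t := by
  rcases le_or_gt 0 t with ht | ht
  · exact right_inv_nonneg y t h1 h2 ht
  · have := right_inv_nonneg y (-t) h1 h2 (by linarith)
    rw [ginv_neg, gy_neg] at this
    linarith

theorem stmt2 : Set.BijOn hmap Sbar Sbar := by
  refine ⟨fun z hz => hz, ?_, ?_⟩
  · intro z1 h1 z2 h2 heq
    have him0 := congrArg Complex.im heq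
    have hre0 := congrArg Complex.re heq
    have him : z1.im = z2.im := him0
    have hre : gy z1.im z1.re = gy z2.im z2.re := hre0
    apply Complex.ext _ him
    have e1 := gy_left_inv z1.im z1.re h1.1 h1.2
    have e2 := gy_left_inv z2.im z2.re h2.1 h2.2
    rw [← e1, hre, him, e2]
  · intro w hw
    refine ⟨⟨ginv w.im w.re, w.im⟩, ⟨hw.1, hw.2⟩, ?_⟩
    apply Complex.ext
    · exact gy_right_inv w.im w.re hw.1 hw.2
    · rfl
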